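/- For three distinct points a, b, c ∈ ℝⁿ, the vector (a-b)‖a-c‖² - (a-c)‖a-b‖² is tangent at a to the circumcircle of the triangle abc, i.e., it is orthogonal to the vector from a to the circumcenter of a, b, c. -/

import Mathlib

theorem stmt9 (n : ℕ) (a b c m : EuclideanSpace ℝ (Fin n))
    (hab : a ≠ b) (hac : a ≠ c) (hbc : b ≠ c)
    (hcol : ¬ Collinear ℝ ({a, b, c} : Set (EuclideanSpace ℝ (Fin n))))
    (hm : m ∈ affineSpan ℝ ({a, b, c} : Set (EuclideanSpace ℝ (Fin n))))
    (hmb : ‖m - a‖ = ‖m - b‖) (hmc : ‖m - a‖ = ‖m - c‖) :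
    inner ℝ ((‖a - c‖ ^ 2 : ℝ) • (a - b) - (‖a - b‖ ^ 2 : ℝ) • (a - c)) (m - a) = (0 : ℝ) := by
  have eb : m - b = (m - a) + (a - b) := by abel
  have ec : m - c = (m - a) + (a - c) := by abel
  have h1 : 2 * (inner ℝ (m - a) (a - b) : ℝ) + ‖a - b‖ ^ 2 = 0 := by
    have := norm_add_sq_real (m - a) (a - b)
    rw [← eb, ← hmb] at this
    linarith
  have h2 : 2 * (inner ℝ (m - a) (a - c) : ℝ) + ‖a - c‖ ^ 2 = 0 := by
    have := norm_add_sq_real (m - a) (a - c)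
    rw [← ec, ← hmc] at this
    linarith
  rw [inner_sub_left, real_inner_smul_left, real_inner_smul_left]
  linear_combination (‖a - c‖ ^ 2 / 2) * h1 - (‖a - b‖ ^ 2 / 2) * h2
    + ‖a - c‖ ^ 2 * real_inner_comm (m - a) (a - b)
    - ‖a - b‖ ^ 2 * real_inner_comm (m - a) (a - c)
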